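/- Let a, b be positive real numbers. Then the function p ↦ M_p(a,b) is concave on the interval [1,∞) and convex on the interval (−∞,−1]; moreover, for a ≠ b these concavity/convexity properties are strict (the second derivative inequality is strict), i.e. ∂²/∂p² M_p(a,b) ≤ 0 for p ≥ 1 and ∂²/∂p² M_p(a,b) ≥ 0 for p ≤ −1, with equality if and only if a = b. -/

import Mathlib

noncomputable section

open Real

/-- Logarithmic mean: `L(x,y) = (x - y)/(log x - log y)` for `x ≠ y`, `L(x,x) = x`. -/
def logMean (x y : ℝ) : ℝ := if x = y then x else (x - y) / (Real.log x - Real.log y)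

/-- Identric mean: `I(x,y) = (1/e) * (x^x / y^y)^(1/(x-y))` for `x ≠ y`, `I(x,x) = x`. -/
def identricMean (x y : ℝ) : ℝ :=
  if x = y then x else (1 / Real.exp 1) * (x ^ x / y ^ y) ^ (1 / (x - y))

/-- Power mean of order `t`: `M_t(a,b) = ((a^t + b^t)/2)^(1/t)` for `t ≠ 0`, `M_0(a,b) = √(ab)`. -/
def powerMean (t a b : ℝ) : ℝ :=
  if t = 0 then Real.sqrt (a * b) else ((a ^ t + b ^ t) / 2) ^ (1 / t)

/-- Lehmer mean of order `p`: `L_p(a,b) = (a^p + b^p)/(a^(p-1) + b^(p-1))`. -/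
def lehmerMean (p a b : ℝ) : ℝ := (a ^ p + b ^ p) / (a ^ (p - 1) + b ^ (p - 1))

/-- Weighted power mean: `M_p(ω,a,b) = ((a^p + ω b^p)/(1 + ω))^(1/p)`. -/
def wPowerMean (p ω a b : ℝ) : ℝ := ((a ^ p + ω * b ^ p) / (1 + ω)) ^ (1 / p)

/-- Modified Alzer mean: `J_p(a,b) = ((p+1)/p) * (a^(p+1) - b^(p+1))/(a^p - b^p)`. -/
def alzerMean (p a b : ℝ) : ℝ :=
  ((p + 1) / p) * ((a ^ (p + 1) - b ^ (p + 1)) / (a ^ p - b ^ p))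


def Af (v : ℝ) : ℝ := v^2/cosh v^2 - 2*(v*sinh v/cosh v) + 2*log (cosh v)
def Bf (v : ℝ) : ℝ := v*sinh v/cosh v - log (cosh v)

lemma cosh_ne (v : ℝ) : cosh v ≠ 0 := (Real.cosh_pos v).ne'

lemma hasDerivAt_logcosh (v : ℝ) : HasDerivAt (fun v => log (cosh v)) (sinh v / cosh v) v :=
  (Real.hasDerivAt_cosh v).log (cosh_ne v)

lemma hasDerivAt_Bf (v : ℝ) : HasDerivAt Bf (v / cosh v^2) v := by
  have h1 : HasDerivAt (fun v : ℝ => v * sinh v / cosh v)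
      (((1 * sinh v + v * cosh v) * cosh v - v * sinh v * sinh v) / cosh v ^ 2) v :=
    ((hasDerivAt_id v).mul (Real.hasDerivAt_sinh v)).div (Real.hasDerivAt_cosh v) (cosh_ne v)
  have h := h1.sub (hasDerivAt_logcosh v)
  refine h.congr_deriv (Eq.symm ?_)
  have hc := cosh_ne v
  have hsq : cosh v ^ 2 - sinh v ^ 2 = 1 := Real.cosh_sq_sub_sinh_sq v
  field_simp
  linear_combination (-v)*hsq

lemma hasDerivAt_Af (v : ℝ) : HasDerivAt Af (-(2*v^2*sinh v)/cosh v^3) v := by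
  have h1 : HasDerivAt (fun v : ℝ => v^2 / cosh v^2)
      (((↑2*v^(2-1)*1) * cosh v^2 - v^2 * (↑2*cosh v^(2-1)*sinh v)) / (cosh v^2)^2) v :=
    (((hasDerivAt_id v).pow 2).div ((Real.hasDerivAt_cosh v).pow 2)
      (pow_ne_zero 2 (cosh_ne v)))
  have h2 : HasDerivAt (fun v : ℝ => v * sinh v / cosh v)
      (((1 * sinh v + v * cosh v) * cosh v - v * sinh v * sinh v) / cosh v ^ 2) v :=
    ((hasDerivAt_id v).mul (Real.hasDerivAt_sinh v)).div (Real.hasDerivAt_cosh v) (cosh_ne v)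
  have h := (h1.sub (h2.const_mul 2)).add ((hasDerivAt_logcosh v).const_mul 2)
  refine h.congr_deriv (Eq.symm ?_)
  have hc := cosh_ne v
  have hsq : cosh v ^ 2 - sinh v ^ 2 = 1 := Real.cosh_sq_sub_sinh_sq v
  push_cast
  field_simp
  linear_combination (v*cosh v)*hsq

lemma Af_even (v : ℝ) : Af (-v) = Af v := by
  unfold Af; rw [Real.cosh_neg, Real.sinh_neg]; ring_nf

lemma Bf_even (v : ℝ) : Bf (-v) = Bf v := by
  unfold Bf; rw [Real.cosh_neg, Real.sinh_neg]; ring_nf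

lemma Af_zero : Af 0 = 0 := by simp [Af]
lemma Bf_zero : Bf 0 = 0 := by simp [Bf]

lemma logcosh_pos {v : ℝ} (hv : v ≠ 0) : 0 < log (cosh v) :=
  Real.log_pos (Real.one_lt_cosh.mpr hv)

lemma Af_neg_of_pos {v : ℝ} (hv : 0 < v) : Af v < 0 := by
  have hmono : StrictMonoOn (fun v => -Af v) (Set.Ici 0) := by
    apply strictMonoOn_of_deriv_pos (convex_Ici 0)
    · exact (Continuous.neg
        (continuous_iff_continuousAt.mpr fun x => (hasDerivAt_Af x).continuousAt)).continuousOn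
    · intro x hx
      rw [interior_Ici] at hx
      have hx' : 0 < x := hx
      rw [(show HasDerivAt (fun v => -Af v) (-(-(2*x^2*sinh x)/cosh x^3)) x from (hasDerivAt_Af x).neg).deriv]
      have hs : 0 < sinh x := Real.sinh_pos_iff.mpr hx
      have hc : 0 < cosh x := Real.cosh_pos x
      rw [neg_div, neg_neg]
      have h2 : (0:ℝ) < 2*x^2 := by nlinarith
      exact div_pos (mul_pos h2 hs) (by positivity)
  have h := hmono Set.self_mem_Ici (Set.mem_Ici.mpr hv.le) hv
  simpa [Af_zero] using h

lemma Af_neg {v : ℝ} (hv : v ≠ 0) : Af v < 0 := by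
  rcases lt_or_gt_of_ne hv with h | h
  · have h2 := Af_neg_of_pos (v := -v) (by linarith)
    rwa [Af_even] at h2
  · exact Af_neg_of_pos h

lemma Af_nonpos (v : ℝ) : Af v ≤ 0 := by
  rcases eq_or_ne v 0 with rfl | h
  · simp [Af_zero]
  · exact (Af_neg h).le

def Hf (v : ℝ) : ℝ := -Af v - Bf v^2

lemma Hf_pos_of_pos {v : ℝ} (hv : 0 < v) : 0 < Hf v := by
  have hmono : StrictMonoOn Hf (Set.Ici 0) := by
    apply strictMonoOn_of_deriv_pos (convex_Ici 0)
    · apply Continuous.continuousOn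
      apply Continuous.sub
      · exact (continuous_iff_continuousAt.mpr fun x => (hasDerivAt_Af x).continuousAt).neg
      · exact ((continuous_iff_continuousAt.mpr fun x => (hasDerivAt_Bf x).continuousAt).pow 2)
    · intro x hx
      rw [interior_Ici] at hx
      have hx' : 0 < x := hx
      have hd : HasDerivAt Hf (2*x/cosh x^2 * log (cosh x)) x := by
        have h := ((hasDerivAt_Af x).neg).sub ((hasDerivAt_Bf x).pow 2)
        refine h.congr_deriv (Eq.symm ?_)
        have hc := cosh_ne x
        unfold Bf
        push_cast
        field_simp
        ring
      rw [hd.deriv]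
      have h1 : 0 < 2*x/cosh x^2 := div_pos (by linarith) (by positivity)
      exact mul_pos h1 (logcosh_pos hx.ne')
  have h := hmono Set.self_mem_Ici (Set.mem_Ici.mpr hv.le) hv
  simpa [Hf, Af_zero, Bf_zero] using h

lemma Hf_pos {v : ℝ} (hv : v ≠ 0) : 0 < Hf v := by
  rcases lt_or_gt_of_ne hv with h | h
  · have h2 := Hf_pos_of_pos (v := -v) (by linarith)
    unfold Hf at *
    rwa [Af_even, Bf_even] at h2
  · exact Hf_pos_of_pos h

lemma Bf_sq_add_Af_nonpos (v : ℝ) : Bf v^2 + Af v ≤ 0 := by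
  rcases eq_or_ne v 0 with rfl | h
  · simp [Af_zero, Bf_zero]
  · have := Hf_pos h; unfold Hf at this; linarith
def Phi (μ δ : ℝ) (t : ℝ) : ℝ := exp (μ + log (cosh (δ*t))/t)

lemma Phi_pos (μ δ t : ℝ) : 0 < Phi μ δ t := exp_pos _

lemma hasDerivAt_Phi (μ δ t : ℝ) (ht : t ≠ 0) :
    HasDerivAt (Phi μ δ) (Phi μ δ t * Bf (δ*t) / t^2) t := by
  have h0 : HasDerivAt (fun t : ℝ => δ*t) δ t := by
    simpa using (hasDerivAt_id t).const_mul δ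
  have hlc : HasDerivAt (fun t : ℝ => log (cosh (δ*t)))
      (sinh (δ*t) / cosh (δ*t) * δ) t := (hasDerivAt_logcosh (δ*t)).comp t h0
  have hdiv : HasDerivAt (fun t : ℝ => log (cosh (δ*t)) / t)
      ((sinh (δ*t)/cosh (δ*t)*δ * t - log (cosh (δ*t)) * 1) / t^2) t :=
    hlc.div (hasDerivAt_id t) ht
  have h := (hdiv.const_add μ).exp
  refine h.congr_deriv (Eq.symm ?_)
  unfold Phi Bf
  have hc := cosh_ne (δ*t)
  field_simp

lemma hasDerivAt_Phi' (μ δ t : ℝ) (ht : t ≠ 0) :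
    HasDerivAt (fun t => Phi μ δ t * Bf (δ*t) / t^2)
      (Phi μ δ t * (t * Af (δ*t) + Bf (δ*t)^2) / t^4) t := by
  have h0 : HasDerivAt (fun t : ℝ => δ*t) δ t := by
    simpa using (hasDerivAt_id t).const_mul δ
  have hB : HasDerivAt (fun t : ℝ => Bf (δ*t)) ((δ*t) / cosh (δ*t)^2 * δ) t :=
    (hasDerivAt_Bf (δ*t)).comp t h0
  have hnum := (hasDerivAt_Phi μ δ t ht).mul hB
  have h := hnum.div ((hasDerivAt_id t).pow 2) (pow_ne_zero 2 ht)
  refine h.congr_deriv (Eq.symm ?_)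
  have hrel : Af (δ*t) = (δ*t)^2/cosh (δ*t)^2 - 2*Bf (δ*t) := by unfold Af Bf; ring
  rw [hrel]
  have hc := cosh_ne (δ*t)
  simp only [Pi.mul_apply, Pi.pow_apply, id]
  field_simp
  ring

lemma pm_eq_Phi (a b : ℝ) (ha : 0 < a) (hb : 0 < b) (t : ℝ) (ht : t ≠ 0) :
    powerMean t a b = Phi ((log a + log b)/2) ((log a - log b)/2) t := by
  have hkey : (a ^ t + b ^ t)/2
      = exp (((log a + log b)/2)*t) * cosh (((log a - log b)/2)*t) := by
    rw [Real.rpow_def_of_pos ha, Real.rpow_def_of_pos hb, Real.cosh_eq, ← mul_div_assoc, mul_add,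
      ← Real.exp_add, ← Real.exp_add,
      show (log a + log b)/2*t + (log a - log b)/2*t = log a * t by ring,
      show (log a + log b)/2*t + -((log a - log b)/2*t) = log b * t by ring]
  unfold powerMean Phi
  rw [if_neg ht, hkey, Real.rpow_def_of_pos (by positivity),
    Real.log_mul (exp_ne_zero _) (cosh_ne _), Real.log_exp]
  congr 1
  field_simp

def muF (a b : ℝ) : ℝ := (log a + log b)/2
def dlt (a b : ℝ) : ℝ := (log a - log b)/2

lemma pm_eq_Phi' (a b : ℝ) (ha : 0 < a) (hb : 0 < b) (t : ℝ) (ht : t ≠ 0) :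
    powerMean t a b = Phi (muF a b) (dlt a b) t := pm_eq_Phi a b ha hb t ht

lemma pm_ev (a b : ℝ) (ha : 0 < a) (hb : 0 < b) {p : ℝ} (hp : p ≠ 0) :
    (fun t => powerMean t a b) =ᶠ[nhds p] Phi (muF a b) (dlt a b) := by
  filter_upwards [compl_singleton_mem_nhds hp] with t ht
  exact pm_eq_Phi' a b ha hb t ht

lemma pm_hasDerivAt (a b : ℝ) (ha : 0 < a) (hb : 0 < b) {p : ℝ} (hp : p ≠ 0) :
    HasDerivAt (fun t => powerMean t a b)
      (Phi (muF a b) (dlt a b) p * Bf (dlt a b * p) / p^2) p :=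
  (hasDerivAt_Phi _ _ p hp).congr_of_eventuallyEq (pm_ev a b ha hb hp)

lemma pm_deriv2 (a b : ℝ) (ha : 0 < a) (hb : 0 < b) {p : ℝ} (hp : p ≠ 0) :
    HasDerivAt (deriv (fun t => powerMean t a b))
      (Phi (muF a b) (dlt a b) p
        * (p * Af (dlt a b * p) + Bf (dlt a b * p)^2) / p^4) p := by
  apply (hasDerivAt_Phi' (muF a b) (dlt a b) p hp).congr_of_eventuallyEq
  filter_upwards [compl_singleton_mem_nhds hp] with t ht
  exact (pm_hasDerivAt a b ha hb ht).deriv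

lemma pm_iter2 (a b : ℝ) (ha : 0 < a) (hb : 0 < b) {p : ℝ} (hp : p ≠ 0) :
    iteratedDeriv 2 (fun t => powerMean t a b) p
      = Phi (muF a b) (dlt a b) p
          * (p * Af (dlt a b * p) + Bf (dlt a b * p)^2) / p^4 := by
  rw [show (2:ℕ) = 1+1 from rfl, iteratedDeriv_succ, iteratedDeriv_one]
  exact (pm_deriv2 a b ha hb hp).deriv

lemma num_nonpos {p v : ℝ} (hp : 1 ≤ p) : p * Af v + Bf v^2 ≤ 0 := by
  nlinarith [mul_nonneg (sub_nonneg.mpr hp) (neg_nonneg.mpr (Af_nonpos v)),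
    Bf_sq_add_Af_nonpos v]

lemma num_neg {p v : ℝ} (hp : 1 ≤ p) (hv : v ≠ 0) : p * Af v + Bf v^2 < 0 := by
  have h := Hf_pos hv
  unfold Hf at h
  nlinarith [mul_nonneg (sub_nonneg.mpr hp) (neg_nonneg.mpr (Af_nonpos v))]

lemma num_nonneg {p v : ℝ} (hp : p ≤ -1) : 0 ≤ p * Af v + Bf v^2 := by
  nlinarith [mul_nonneg (by linarith : (0:ℝ) ≤ -(p+1)) (neg_nonneg.mpr (Af_nonpos v)),
    sq_nonneg (Bf v), Af_nonpos v]

lemma num_pos {p v : ℝ} (hp : p ≤ -1) (hv : v ≠ 0) : 0 < p * Af v + Bf v^2 := by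
  have h := Af_neg hv
  nlinarith [mul_nonneg (by linarith : (0:ℝ) ≤ -(p+1)) (neg_nonneg.mpr (Af_nonpos v)),
    sq_nonneg (Bf v), Af_nonpos v]

lemma dlt_eq_zero (a b : ℝ) (ha : 0 < a) (hb : 0 < b) : dlt a b = 0 ↔ a = b := by
  unfold dlt
  constructor
  · intro h
    have hl : log a = log b := by linarith
    calc a = exp (log a) := (exp_log ha).symm
    _ = exp (log b) := by rw [hl]
    _ = b := exp_log hb
  · rintro rfl; ring

theorem powerMean_concave_convex_in_order (a b : ℝ) (ha : 0 < a) (hb : 0 < b) :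
    ConcaveOn ℝ (Set.Ici (1 : ℝ)) (fun p => powerMean p a b) ∧
    ConvexOn ℝ (Set.Iic (-1 : ℝ)) (fun p => powerMean p a b) ∧
    (∀ p : ℝ, 1 ≤ p → iteratedDeriv 2 (fun t => powerMean t a b) p ≤ 0) ∧
    (∀ p : ℝ, p ≤ -1 → 0 ≤ iteratedDeriv 2 (fun t => powerMean t a b) p) ∧
    (∀ p : ℝ, (1 ≤ p ∨ p ≤ -1) →
      (iteratedDeriv 2 (fun t => powerMean t a b) p = 0 ↔ a = b)) := by
  have h3 : ∀ p : ℝ, 1 ≤ p → iteratedDeriv 2 (fun t => powerMean t a b) p ≤ 0 := by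
    intro p hp
    have hp0 : p ≠ 0 := by intro h; rw [h] at hp; norm_num at hp
    rw [pm_iter2 a b ha hb hp0]
    have h1 := num_nonpos (v := dlt a b * p) hp
    have h2 := Phi_pos (muF a b) (dlt a b) p
    have h4 : (0:ℝ) < p^4 := by positivity
    apply div_nonpos_of_nonpos_of_nonneg _ h4.le
    nlinarith [mul_nonneg h2.le (neg_nonneg.mpr h1)]
  have h4 : ∀ p : ℝ, p ≤ -1 → 0 ≤ iteratedDeriv 2 (fun t => powerMean t a b) p := by
    intro p hp
    have hp0 : p ≠ 0 := by intro h; rw [h] at hp; norm_num at hp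
    rw [pm_iter2 a b ha hb hp0]
    have h1 := num_nonneg (v := dlt a b * p) hp
    have h2 := Phi_pos (muF a b) (dlt a b) p
    have h4 : (0:ℝ) < p^4 := by positivity
    exact div_nonneg (mul_nonneg h2.le h1) h4.le
  have h5 : ∀ p : ℝ, (1 ≤ p ∨ p ≤ -1) →
      (iteratedDeriv 2 (fun t => powerMean t a b) p = 0 ↔ a = b) := by
    intro p hp
    have hp0 : p ≠ 0 := by
      rcases hp with h | h <;> intro h0 <;> rw [h0] at h <;> norm_num at h
    rw [pm_iter2 a b ha hb hp0]
    constructor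
    · intro h
      by_contra hab
      have hv : dlt a b * p ≠ 0 :=
        mul_ne_zero (fun hd => hab ((dlt_eq_zero a b ha hb).mp hd)) hp0
      have h2 := Phi_pos (muF a b) (dlt a b) p
      have hp4 : (0:ℝ) < p^4 := by positivity
      rcases hp with h1 | h1
      · have hn := num_neg h1 hv
        have hlt : Phi (muF a b) (dlt a b) p
            * (p * Af (dlt a b * p) + Bf (dlt a b * p)^2) / p^4 < 0 :=
          div_neg_of_neg_of_pos (by nlinarith [mul_pos h2 (neg_pos.mpr hn)]) hp4
        exact (ne_of_lt hlt) h
      · have hn := num_pos h1 hv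
        have hlt : 0 < Phi (muF a b) (dlt a b) p
            * (p * Af (dlt a b * p) + Bf (dlt a b * p)^2) / p^4 :=
          div_pos (mul_pos h2 hn) hp4
        exact (ne_of_gt hlt) h
    · intro hab
      have hd : dlt a b = 0 := (dlt_eq_zero a b ha hb).mpr hab
      rw [hd, zero_mul, Af_zero, Bf_zero]
      simp
  refine ⟨?_, ?_, h3, h4, h5⟩
  · apply concaveOn_of_deriv2_nonpos (convex_Ici 1)
    · intro x hx
      have hx0 : x ≠ 0 := by
        have h1 : (1:ℝ) ≤ x := hx
        intro h; rw [h] at h1; norm_num at h1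
      exact (pm_hasDerivAt a b ha hb hx0).continuousAt.continuousWithinAt
    · rw [interior_Ici]
      intro x hx
      have hx0 : x ≠ 0 := (lt_trans zero_lt_one hx).ne'
      exact (pm_hasDerivAt a b ha hb hx0).differentiableAt.differentiableWithinAt
    · rw [interior_Ici]
      intro x hx
      have hx0 : x ≠ 0 := (lt_trans zero_lt_one hx).ne'
      exact (pm_deriv2 a b ha hb hx0).differentiableAt.differentiableWithinAt
    · rw [interior_Ici]
      intro x hx
      rw [← iteratedDeriv_eq_iterate]
      exact h3 x hx.le
  · apply convexOn_of_deriv2_nonneg (convex_Iic (-1))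
    · intro x hx
      have hx0 : x ≠ 0 := by
        have h1 : x ≤ (-1:ℝ) := hx
        intro h; rw [h] at h1; norm_num at h1
      exact (pm_hasDerivAt a b ha hb hx0).continuousAt.continuousWithinAt
    · rw [interior_Iic]
      intro x hx
      have hx0 : x ≠ 0 := (hx.trans (by norm_num)).ne
      exact (pm_hasDerivAt a b ha hb hx0).differentiableAt.differentiableWithinAt
    · rw [interior_Iic]
      intro x hx
      have hx0 : x ≠ 0 := (hx.trans (by norm_num)).ne
      exact (pm_deriv2 a b ha hb hx0).differentiableAt.differentiableWithinAt
    · rw [interior_Iic]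
      intro x hx
      rw [← iteratedDeriv_eq_iterate]
      exact h4 x hx.le
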